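/- For all n ≥ 1, P_{n+1}(x) = Σ_{k=0}^{n} C(n,k)·P_k(x)·P_{n-k}(x). -/

import Mathlib

open Polynomial Finset

noncomputable def tanDerivPoly : ℕ → Polynomial ℝ
  | 0 => X
  | n + 1 => (1 + X ^ 2) * derivative (tanDerivPoly n)

lemma tdp_succ (n : ℕ) :
    tanDerivPoly (n + 1) = (1 + X ^ 2) * derivative (tanDerivPoly n) := rfl

theorem tanDerivPoly_convolution (n : ℕ) (hn : 1 ≤ n) :
    tanDerivPoly (n + 1) =
      ∑ k ∈ Finset.range (n + 1),
        (n.choose k : Polynomial ℝ) * tanDerivPoly k * tanDerivPoly (n - k) := by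
  induction n, hn using Nat.le_induction with
  | base =>
    simp [tanDerivPoly, Finset.sum_range_succ]
    have : (C (2:ℝ)) = 2 := by rw [show (2:ℝ) = 1 + 1 by norm_num, map_add, map_one]; norm_num
    ring_nf
  | succ n hn ih =>
    rw [tdp_succ, ih, derivative_sum, Finset.mul_sum]
    have step : ∀ k ∈ Finset.range (n + 1),
        (1 + X ^ 2) * derivative ((n.choose k : Polynomial ℝ) * tanDerivPoly k *
          tanDerivPoly (n - k)) =
        (n.choose k : Polynomial ℝ) * tanDerivPoly (k + 1) * tanDerivPoly (n - k) +
        (n.choose k : Polynomial ℝ) * tanDerivPoly k * tanDerivPoly (n - k + 1) := by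
      intro k _
      simp only [derivative_mul, derivative_natCast, zero_mul, zero_add, tdp_succ]
      ring
    rw [Finset.sum_congr rfl step, Finset.sum_add_distrib]
    -- now RHS manipulation
    rw [Finset.sum_range_succ' (fun k => ((n+1).choose k : Polynomial ℝ) *
      tanDerivPoly k * tanDerivPoly (n + 1 - k))]
    have h1 : ∀ k ∈ Finset.range (n + 1),
        (((n+1).choose (k+1) : ℕ) : Polynomial ℝ) * tanDerivPoly (k+1) *
          tanDerivPoly (n + 1 - (k+1)) =
        (n.choose k : Polynomial ℝ) * tanDerivPoly (k + 1) * tanDerivPoly (n - k) +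
        (n.choose (k+1) : Polynomial ℝ) * tanDerivPoly (k + 1) * tanDerivPoly (n - k) := by
      intro k _
      rw [Nat.choose_succ_succ]
      push_cast
      simp only [Nat.succ_eq_add_one, Nat.add_sub_cancel]
      ring
    rw [Finset.sum_congr rfl h1, Finset.sum_add_distrib]
    have h2 : ∑ k ∈ Finset.range (n + 1),
        (n.choose k : Polynomial ℝ) * tanDerivPoly k * tanDerivPoly (n - k + 1) =
        (∑ k ∈ Finset.range (n + 1),
          (n.choose (k+1) : Polynomial ℝ) * tanDerivPoly (k+1) * tanDerivPoly (n - k)) +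
        ((n+1).choose 0 : Polynomial ℝ) * tanDerivPoly 0 * tanDerivPoly (n + 1 - 0) := by
      rw [Finset.sum_range_succ'
        (fun k => (n.choose k : Polynomial ℝ) * tanDerivPoly k * tanDerivPoly (n - k + 1)),
        Finset.sum_range_succ
        (fun k => (n.choose (k+1) : Polynomial ℝ) * tanDerivPoly (k+1) * tanDerivPoly (n - k))]
      have hz : (n.choose (n+1) : Polynomial ℝ) = 0 := by
        rw [Nat.choose_eq_zero_of_lt (by omega)]; simp
      rw [hz, zero_mul, zero_mul, add_zero]
      congr 1
      · apply Finset.sum_congr rfl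
        intro k hk
        have hk' : k < n := Finset.mem_range.mp hk
        have : n - (k + 1) + 1 = n - k := by omega
        rw [this]
      · simp
    rw [h2]
    ring
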